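/- Let H be a quasi-Hopf algebra in the sense of Drinfeld (bijective antipode) which is semisimple as an algebra. Then H is finite dimensional. -/

import Mathlib

set_option autoImplicit false

open TensorProduct

/-- A quasi-bialgebra in the sense of Drinfeld. The reassociator `Phi` lives in
`H ⊗ (H ⊗ H)`, and `(Δ ⊗ id)` is transported along the associator. -/
structure QuasiBialgebra (k H : Type*) [Field k] [Ring H] [Algebra k H] where
  comul : H →ₐ[k] H ⊗[k] H
  counit : H →ₐ[k] k
  Phi : H ⊗[k] (H ⊗[k] H)
  PhiInv : H ⊗[k] (H ⊗[k] H)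
  Phi_invertible : Phi * PhiInv = 1
  invertible_Phi : PhiInv * Phi = 1
  quasi_coassoc : ∀ h : H,
    (Algebra.TensorProduct.map (AlgHom.id k H) comul) (comul h) * Phi
      = Phi * (Algebra.TensorProduct.assoc k k k H H H)
          ((Algebra.TensorProduct.map comul (AlgHom.id k H)) (comul h))
  counit_right : ∀ h : H,
    (Algebra.TensorProduct.map (AlgHom.id k H) counit) (comul h) = h ⊗ₜ[k] 1
  counit_left : ∀ h : H,
    (Algebra.TensorProduct.map counit (AlgHom.id k H)) (comul h) = 1 ⊗ₜ[k] h
  pentagon :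
    (1 ⊗ₜ[k] Phi)
      * (Algebra.TensorProduct.map (AlgHom.id k H)
          ((Algebra.TensorProduct.assoc k k k H H H).toAlgHom.comp
            (Algebra.TensorProduct.map comul (AlgHom.id k H)))) Phi
      * (Algebra.TensorProduct.map (AlgHom.id k H)
            (Algebra.TensorProduct.assoc k k k H H H).toAlgHom)
          ((Algebra.TensorProduct.assoc k k k H (H ⊗[k] H) H) (Phi ⊗ₜ[k] 1))
    = (Algebra.TensorProduct.map (AlgHom.id k H)
        (Algebra.TensorProduct.map (AlgHom.id k H) comul)) Phi
      * (Algebra.TensorProduct.assoc k k k H H (H ⊗[k] H))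
          ((Algebra.TensorProduct.map comul (AlgHom.id k (H ⊗[k] H))) Phi)
  counit_mid_Phi :
    (Algebra.TensorProduct.map (AlgHom.id k H)
      (Algebra.TensorProduct.map counit (AlgHom.id k H))) Phi = 1

/-- A quasi-Hopf algebra: a quasi-bialgebra with an algebra anti-homomorphism `S`
and elements `alpha`, `beta` satisfying Drinfeld's antipode axioms.  Bijectivity
of `S` is *not* assumed. -/
structure QuasiHopfAlgebra (k H : Type*) [Field k] [Ring H] [Algebra k H] extends
    QuasiBialgebra k H where
  S : H →ₗ[k] H
  alpha : H
  beta : H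
  S_one : S 1 = 1
  S_mul : ∀ a b : H, S (a * b) = S b * S a
  antipode_left : ∀ h : H,
    (LinearMap.mul' k H)
      ((TensorProduct.map ((LinearMap.mulRight k alpha) ∘ₗ S) LinearMap.id) (comul h))
      = counit h • alpha
  antipode_right : ∀ h : H,
    (LinearMap.mul' k H)
      ((TensorProduct.map LinearMap.id ((LinearMap.mulLeft k beta) ∘ₗ S)) (comul h))
      = counit h • beta
  antipode_Phi :
    (LinearMap.mul' k H)
      ((TensorProduct.map LinearMap.id
        ((LinearMap.mul' k H) ∘ₗ (TensorProduct.map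
          ((LinearMap.mulRight k alpha) ∘ₗ ((LinearMap.mulLeft k beta) ∘ₗ S))
          LinearMap.id))) Phi) = 1
  antipode_PhiInv :
    (LinearMap.mul' k H)
      ((TensorProduct.map ((LinearMap.mulRight k alpha) ∘ₗ S)
        ((LinearMap.mul' k H) ∘ₗ (TensorProduct.map (LinearMap.mulRight k beta) S)))
        PhiInv) = 1

namespace QuasiHopfAlgebra

variable {k H : Type*} [Field k] [Ring H] [Algebra k H] (Q : QuasiHopfAlgebra k H)

/-- The space of left integrals in `H`. -/
def leftIntegrals : Submodule k H where
  carrier := {t | ∀ h : H, h * t = Q.counit h • t}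
  add_mem' := by intro a b ha hb h; rw [mul_add, ha h, hb h, smul_add]
  zero_mem' := by intro h; simp
  smul_mem' := by intro c x hx h; rw [mul_smul_comm, hx h, smul_comm]

/-- The space of right integrals in `H`. -/
def rightIntegrals : Submodule k H where
  carrier := {t | ∀ h : H, t * h = Q.counit h • t}
  add_mem' := by intro a b ha hb h; rw [add_mul, ha h, hb h, smul_add]
  zero_mem' := by intro h; simp
  smul_mem' := by intro c x hx h; rw [smul_mul_assoc, hx h, smul_comm]

/-- The element `p_R = ∑ x¹ ⊗ x² β S(x³)`. -/
noncomputable def pR : H ⊗[k] H :=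
  (TensorProduct.map LinearMap.id
    ((LinearMap.mul' k H) ∘ₗ (TensorProduct.map (LinearMap.mulRight k Q.beta) Q.S)))
    Q.PhiInv

/-- The element `∑ X¹ t₁ ⊗ S(X² t₂) α X³` built from a (left integral) `t`. -/
noncomputable def Tel (t : H) : H ⊗[k] H :=
  (TensorProduct.map LinearMap.id
    ((LinearMap.mul' k H) ∘ₗ
      (TensorProduct.map ((LinearMap.mulRight k Q.alpha) ∘ₗ Q.S) LinearMap.id)))
    (Q.Phi * (Algebra.TensorProduct.assoc k k k H H H) (Q.comul t ⊗ₜ[k] 1))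

end QuasiHopfAlgebra

section Aux

open TensorProduct

variable {k H : Type*} [Field k] [Ring H] [Algebra k H] (Q : QuasiHopfAlgebra k H)

/-- `μ(x ⊗ y) = S(x) α y`. -/
noncomputable def muQ : H ⊗[k] H →ₗ[k] H :=
  (LinearMap.mul' k H) ∘ₗ
    (TensorProduct.map ((LinearMap.mulRight k Q.alpha) ∘ₗ Q.S) LinearMap.id)

@[simp] lemma muQ_tmul (x y : H) : muQ Q (x ⊗ₜ[k] y) = Q.S x * Q.alpha * y := by
  simp [muQ]

/-- `P = id ⊗ μ`. -/
noncomputable def PQ : H ⊗[k] (H ⊗[k] H) →ₗ[k] H ⊗[k] H :=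
  TensorProduct.map LinearMap.id (muQ Q)

@[simp] lemma PQ_tmul (x : H) (w : H ⊗[k] H) : PQ Q (x ⊗ₜ[k] w) = x ⊗ₜ[k] muQ Q w := by
  simp [PQ]

/-- `L(x ⊗ y) = x β y`. -/
noncomputable def LQ : H ⊗[k] H →ₗ[k] H :=
  (LinearMap.mul' k H) ∘ₗ (TensorProduct.map (LinearMap.mulRight k Q.beta) LinearMap.id)

@[simp] lemma LQ_tmul (x y : H) : LQ Q (x ⊗ₜ[k] y) = x * Q.beta * y := by
  simp [LQ]

lemma Tel_eq (t : H) :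
    Q.Tel t = PQ Q (Q.Phi * (Algebra.TensorProduct.assoc k k k H H H) (Q.comul t ⊗ₜ[k] 1)) := rfl

lemma muQ_comul (b : H) : muQ Q (Q.comul b) = Q.counit b • Q.alpha := Q.antipode_left b

lemma qh_algMap_eq {A B C D : Type*} [Semiring A] [Semiring B] [Semiring C] [Semiring D]
    [Algebra k A] [Algebra k B] [Algebra k C] [Algebra k D] (f : A →ₐ[k] B) (g : C →ₐ[k] D)
    (u : A ⊗[k] C) :
    Algebra.TensorProduct.map f g u = TensorProduct.map f.toLinearMap g.toLinearMap u := by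
  induction u using TensorProduct.induction_on with
  | zero => simp
  | tmul a c => simp
  | add x y hx hy => simp [hx, hy]

lemma qh_muQ_mul_right (y z : H) (v : H ⊗[k] H) :
    muQ Q (v * (y ⊗ₜ[k] z)) = Q.S y * muQ Q v * z := by
  induction v using TensorProduct.induction_on with
  | zero => simp
  | tmul p q => simp [Algebra.TensorProduct.tmul_mul_tmul, Q.S_mul, mul_assoc]
  | add u v hu hv => simp [add_mul, hu, hv, mul_add]

lemma qh_step1 (U : H ⊗[k] (H ⊗[k] H)) (h : H) :
    PQ Q U * ((1:H) ⊗ₜ[k] h) = PQ Q (U * ((1:H) ⊗ₜ[k] ((1:H) ⊗ₜ[k] h))) := by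
  induction U using TensorProduct.induction_on with
  | zero => simp
  | tmul x w =>
      rw [PQ_tmul, Algebra.TensorProduct.tmul_mul_tmul, Algebra.TensorProduct.tmul_mul_tmul,
        PQ_tmul, qh_muQ_mul_right]
      simp [Q.S_one]
  | add u v hu hv => rw [map_add, add_mul, add_mul, hu, hv, map_add]

lemma qh_claimA (t : H) (ht : ∀ h : H, h * t = Q.counit h • t) (u : H ⊗[k] H) :
    (Algebra.TensorProduct.map Q.comul (AlgHom.id k H)) u * (Q.comul t ⊗ₜ[k] (1:H))
      = TensorProduct.map
          ((LinearMap.toSpanSingleton k (H ⊗[k] H) (Q.comul t)) ∘ₗ Q.counit.toLinearMap)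
          LinearMap.id u := by
  induction u using TensorProduct.induction_on with
  | zero => simp
  | tmul x y =>
      rw [Algebra.TensorProduct.map_tmul, Algebra.TensorProduct.tmul_mul_tmul, ← map_mul,
        ht x, map_smul]
      simp [TensorProduct.smul_tmul']
  | add u v hu hv => rw [map_add, add_mul, hu, hv, map_add]

lemma qh_claimA_comul (t : H) (ht : ∀ h : H, h * t = Q.counit h • t) (h : H) :
    Q.comul t ⊗ₜ[k] h
      = (Algebra.TensorProduct.map Q.comul (AlgHom.id k H)) (Q.comul h)
          * (Q.comul t ⊗ₜ[k] (1:H)) := by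
  rw [qh_claimA Q t ht (Q.comul h)]
  have hcomp : (TensorProduct.map (LinearMap.toSpanSingleton k (H ⊗[k] H) (Q.comul t))
        (LinearMap.id (R := k) (M := H))) ∘ₗ
        (TensorProduct.map Q.counit.toLinearMap LinearMap.id)
      = TensorProduct.map
          ((LinearMap.toSpanSingleton k (H ⊗[k] H) (Q.comul t)) ∘ₗ Q.counit.toLinearMap)
          LinearMap.id := by
    rw [← TensorProduct.map_comp, LinearMap.id_comp]
  rw [← hcomp, LinearMap.comp_apply]
  have hcl : TensorProduct.map Q.counit.toLinearMap LinearMap.id (Q.comul h)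
      = (1:k) ⊗ₜ[k] h := by
    have := Q.counit_left h
    rw [qh_algMap_eq] at this
    simpa using this
  rw [hcl]
  simp

lemma qh_claimB (b : H) (w : H ⊗[k] H) :
    muQ Q (Q.comul b * w) = Q.counit b • muQ Q w := by
  induction w using TensorProduct.induction_on with
  | zero => simp
  | tmul y z =>
      rw [qh_muQ_mul_right, muQ_comul, muQ_tmul]
      simp [smul_mul_assoc, mul_smul_comm]
  | add u v hu hv => rw [mul_add, map_add, hu, hv, map_add, smul_add]

lemma qh_step4 (h : H) (U : H ⊗[k] (H ⊗[k] H)) :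
    PQ Q ((Algebra.TensorProduct.map (AlgHom.id k H) Q.comul) (Q.comul h) * U)
      = (h ⊗ₜ[k] (1:H)) * PQ Q U := by
  induction U using TensorProduct.induction_on with
  | zero => simp
  | add u v hu hv => rw [mul_add, map_add, hu, hv, map_add, mul_add]
  | tmul x w =>
      have inner : ∀ u : H ⊗[k] H,
          PQ Q ((Algebra.TensorProduct.map (AlgHom.id k H) Q.comul) u * (x ⊗ₜ[k] w))
            = TensorProduct.map (LinearMap.mulRight k x)
                ((LinearMap.toSpanSingleton k H (muQ Q w)) ∘ₗ Q.counit.toLinearMap) u := by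
        intro u
        induction u using TensorProduct.induction_on with
        | zero => simp
        | add p q hp hq => rw [map_add, add_mul, map_add, hp, hq, map_add]
        | tmul a b =>
            rw [Algebra.TensorProduct.map_tmul, Algebra.TensorProduct.tmul_mul_tmul,
              PQ_tmul, qh_claimB]
            simp
      rw [inner]
      have hsplit : TensorProduct.map (LinearMap.mulRight k x)
            ((LinearMap.toSpanSingleton k H (muQ Q w)) ∘ₗ Q.counit.toLinearMap) (Q.comul h)
          = TensorProduct.map (LinearMap.mulRight k x)
              (LinearMap.toSpanSingleton k H (muQ Q w))
              (TensorProduct.map LinearMap.id Q.counit.toLinearMap (Q.comul h)) := by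
        rw [← LinearMap.comp_apply, ← TensorProduct.map_comp, LinearMap.comp_id]
      rw [hsplit]
      have hcr : TensorProduct.map LinearMap.id Q.counit.toLinearMap (Q.comul h)
          = h ⊗ₜ[k] (1:k) := by
        have := Q.counit_right h
        rw [qh_algMap_eq] at this
        simpa using this
      rw [hcr]
      simp [Algebra.TensorProduct.tmul_mul_tmul]

lemma qh_star (t : H) (ht : ∀ h : H, h * t = Q.counit h • t) (h : H) :
    Q.Tel t * ((1:H) ⊗ₜ[k] h) = (h ⊗ₜ[k] (1:H)) * Q.Tel t := by
  rw [Tel_eq, qh_step1]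
  have h2 : (Algebra.TensorProduct.assoc k k k H H H) (Q.comul t ⊗ₜ[k] (1:H))
        * ((1:H) ⊗ₜ[k] ((1:H) ⊗ₜ[k] h))
      = (Algebra.TensorProduct.assoc k k k H H H) (Q.comul t ⊗ₜ[k] h) := by
    rw [show ((1:H) ⊗ₜ[k] ((1:H) ⊗ₜ[k] h))
        = (Algebra.TensorProduct.assoc k k k H H H) ((((1:H) ⊗ₜ[k] (1:H))) ⊗ₜ[k] h) from
      (Algebra.TensorProduct.assoc_tmul (R := k) (S := k) (T := k) (a := (1:H)) (b := (1:H)) (c := h)).symm, ← map_mul]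
    congr 1
    rw [Algebra.TensorProduct.tmul_mul_tmul, ← Algebra.TensorProduct.one_def, mul_one, one_mul]
  have e1 : Q.Phi * (Algebra.TensorProduct.assoc k k k H H H) (Q.comul t ⊗ₜ[k] (1:H))
        * ((1:H) ⊗ₜ[k] ((1:H) ⊗ₜ[k] h))
      = (Algebra.TensorProduct.map (AlgHom.id k H) Q.comul) (Q.comul h)
          * (Q.Phi * (Algebra.TensorProduct.assoc k k k H H H) (Q.comul t ⊗ₜ[k] (1:H))) := by
    rw [mul_assoc, h2, qh_claimA_comul Q t ht h, map_mul, ← mul_assoc,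
      ← Q.quasi_coassoc h, mul_assoc]
  rw [e1, qh_step4]

/-- `c ↦ ∑ X¹ c S(X²) α X³`. -/
noncomputable def LamQ : H →ₗ[k] H where
  toFun c := (LinearMap.mul' k H)
    ((TensorProduct.map (LinearMap.mulRight k c) (muQ Q)) Q.Phi)
  map_add' c c' := by
    rw [show LinearMap.mulRight k (c + c')
        = LinearMap.mulRight k c + LinearMap.mulRight k c' from
      LinearMap.ext fun x => by simp [mul_add], TensorProduct.map_add_left,
      LinearMap.add_apply, map_add]
  map_smul' r c := by
    rw [show LinearMap.mulRight k (r • c) = r • LinearMap.mulRight k c from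
      LinearMap.ext fun x => by simp [mul_smul_comm], TensorProduct.map_smul_left,
      LinearMap.smul_apply, map_smul, RingHom.id_apply]

lemma LamQ_apply (c : H) :
    LamQ Q c = (LinearMap.mul' k H)
      ((TensorProduct.map (LinearMap.mulRight k c) (muQ Q)) Q.Phi) := rfl

lemma qh_LamQ_beta : LamQ Q Q.beta = 1 := by
  have key : ∀ V : H ⊗[k] (H ⊗[k] H),
      (LinearMap.mul' k H) ((TensorProduct.map (LinearMap.mulRight k Q.beta) (muQ Q)) V)
        = (LinearMap.mul' k H)
            ((TensorProduct.map LinearMap.id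
              ((LinearMap.mul' k H) ∘ₗ (TensorProduct.map
                ((LinearMap.mulRight k Q.alpha) ∘ₗ ((LinearMap.mulLeft k Q.beta) ∘ₗ Q.S))
                LinearMap.id))) V) := by
    intro V
    induction V using TensorProduct.induction_on with
    | zero => simp
    | add u v hu hv => rw [map_add, map_add, hu, hv, map_add, map_add]
    | tmul x w =>
        induction w using TensorProduct.induction_on with
        | zero => simp
        | add p q hp hq =>
            rw [TensorProduct.tmul_add, map_add, map_add, hp, hq, map_add, map_add]
        | tmul y z => simp [muQ, mul_assoc]
  rw [LamQ_apply, key Q.Phi]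
  exact Q.antipode_Phi

lemma qh_claim5 (w : H ⊗[k] H) :
    LQ Q (PQ Q (Q.Phi * (Algebra.TensorProduct.assoc k k k H H H) (w ⊗ₜ[k] (1:H))))
      = LamQ Q ((LinearMap.mul' k H)
          ((TensorProduct.map LinearMap.id ((LinearMap.mulLeft k Q.beta) ∘ₗ Q.S)) w)) := by
  induction w using TensorProduct.induction_on with
  | zero => simp [TensorProduct.zero_tmul]
  | add p q hp hq =>
      rw [TensorProduct.add_tmul, map_add, mul_add, map_add, map_add, hp, hq,
        map_add, map_add, map_add]
  | tmul a b =>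
      rw [Algebra.TensorProduct.assoc_tmul]
      have inner : ∀ V : H ⊗[k] (H ⊗[k] H),
          LQ Q (PQ Q (V * (a ⊗ₜ[k] (b ⊗ₜ[k] (1:H)))))
            = (LinearMap.mul' k H)
                ((TensorProduct.map (LinearMap.mulRight k (a * (Q.beta * Q.S b))) (muQ Q)) V) := by
        intro V
        induction V using TensorProduct.induction_on with
        | zero => simp
        | add u v hu hv => rw [add_mul, map_add, map_add, hu, hv, map_add, map_add]
        | tmul x w' =>
            rw [Algebra.TensorProduct.tmul_mul_tmul, PQ_tmul, qh_muQ_mul_right, LQ_tmul]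
            simp [mul_assoc]
      rw [inner Q.Phi, ← LamQ_apply]
      simp
lemma qh_LQ_Tel (t : H) : LQ Q (Q.Tel t) = Q.counit t • 1 := by
  rw [Tel_eq, qh_claim5 Q (Q.comul t), Q.antipode_right t, map_smul, qh_LamQ_beta]

lemma qh_LQ_left (h : H) (u : H ⊗[k] H) :
    LQ Q ((h ⊗ₜ[k] (1:H)) * u) = h * LQ Q u := by
  induction u using TensorProduct.induction_on with
  | zero => simp
  | tmul x y => rw [Algebra.TensorProduct.tmul_mul_tmul, LQ_tmul, LQ_tmul]; simp [mul_assoc]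
  | add u v hu hv => rw [mul_add, map_add, hu, hv, map_add, mul_add]

lemma qh_exists_integral [IsSemisimpleRing H] :
    ∃ t : H, (∀ h : H, h * t = Q.counit h • t) ∧ Q.counit t = 1 := by
  let Kε : Submodule H H :=
    { carrier := {x | Q.counit x = 0}
      add_mem' := fun {a b} ha hb => by simp only [Set.mem_setOf_eq, map_add] at *; rw [ha, hb, add_zero]
      zero_mem' := by simp
      smul_mem' := fun c x hx => by
        simp only [Set.mem_setOf_eq, smul_eq_mul, map_mul] at *; rw [hx, mul_zero] }
  obtain ⟨I, hI⟩ := ComplementedLattice.exists_isCompl Kε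
  have h1 : (1:H) ∈ Kε ⊔ I := by rw [hI.codisjoint.eq_top]; trivial
  obtain ⟨nn, hn, e, heI, hne⟩ := Submodule.mem_sup.1 h1
  have hεe : Q.counit e = 1 := by
    have := congrArg Q.counit hne
    rw [map_add, hn, zero_add, map_one] at this
    exact this
  refine ⟨e, fun h => ?_, hεe⟩
  have mem1 : h * e - Q.counit h • e ∈ Kε := by
    show Q.counit (h * e - Q.counit h • e) = 0
    rw [map_sub, map_mul, map_smul, hεe, mul_one, smul_eq_mul, mul_one, sub_self]
  have mem2 : h * e - Q.counit h • e ∈ I := by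
    have he1 : h * e ∈ I := by simpa [smul_eq_mul] using I.smul_mem h heI
    have he2 : Q.counit h • e ∈ I := by
      have := I.smul_mem (algebraMap k H (Q.counit h)) heI
      simpa [smul_eq_mul, Algebra.smul_def] using this
    exact I.sub_mem he1 he2
  have hz : h * e - Q.counit h • e = 0 :=
    Submodule.disjoint_def.mp hI.disjoint _ mem1 mem2
  exact sub_eq_zero.mp hz

end Aux

/-- a semisimple quasi-Hopf algebra with bijective antipode is finite
dimensional. -/
theorem finiteDimensional_of_semisimple {k H : Type*} [Field k]
    [Ring H] [Algebra k H] [IsSemisimpleRing H] (Q : QuasiHopfAlgebra k H)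
    (hS : Function.Bijective Q.S) :
    FiniteDimensional k H := by
  classical
  obtain ⟨t, ht, hεt⟩ := qh_exists_integral Q
  set T : H ⊗[k] H := Q.Tel t with hT
  obtain ⟨s, hs⟩ := TensorProduct.exists_finset T
  set A : Submodule k H := Submodule.span k (↑(s.image Prod.fst) : Set H) with hA
  set B : Submodule k H := Submodule.span k (↑(s.image Prod.snd) : Set H) with hB
  haveI : FiniteDimensional k A := FiniteDimensional.span_finset k _
  haveI : FiniteDimensional k B := FiniteDimensional.span_finset k _
  set n := Module.finrank k B with hn
  let b : Module.Basis (Fin n) k B := Module.finBasis k B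
  obtain ⟨Bc, hBc⟩ := Submodule.exists_isCompl B
  let π : H →ₗ[k] B := B.linearProjOfIsCompl Bc hBc
  let φ : Fin n → (H →ₗ[k] k) := fun j => (b.coord j) ∘ₗ π
  let ρ : Fin n → (H ⊗[k] H →ₗ[k] H) :=
    fun j => TensorProduct.lift (((LinearMap.lsmul k H) ∘ₗ (φ j)).flip)
  have ρ_tmul : ∀ j (x y : H), ρ j (x ⊗ₜ[k] y) = φ j y • x := by
    intro j x y; simp [ρ]
  -- reconstruction of tensors with second leg in B
  have recon : ∀ (x y : H), y ∈ B → (∑ j, (ρ j (x ⊗ₜ[k] y)) ⊗ₜ[k] ((b j : H))) = x ⊗ₜ[k] y := by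
    intro x y hy
    have hπ : π y = ⟨y, hy⟩ := Submodule.linearProjOfIsCompl_apply_left hBc ⟨y, hy⟩
    have hφ : ∀ j, φ j y = b.repr ⟨y, hy⟩ j := by
      intro j; simp [φ, hπ, Module.Basis.coord_apply]
    calc (∑ j, (ρ j (x ⊗ₜ[k] y)) ⊗ₜ[k] ((b j : H)))
        = ∑ j, x ⊗ₜ[k] ((b.repr ⟨y, hy⟩ j) • (b j : H)) := by
          refine Finset.sum_congr rfl fun j _ => ?_
          rw [ρ_tmul, hφ j, TensorProduct.smul_tmul]
      _ = x ⊗ₜ[k] (∑ j, (b.repr ⟨y, hy⟩ j) • (b j : H)) := by rw [TensorProduct.tmul_sum]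
      _ = x ⊗ₜ[k] y := by
          congr 1
          have : ((∑ j, (b.repr ⟨y, hy⟩ j) • (b j)) : B) = ⟨y, hy⟩ := b.sum_repr ⟨y, hy⟩
          calc (∑ j, (b.repr ⟨y, hy⟩ j) • (b j : H))
              = ((∑ j, (b.repr ⟨y, hy⟩ j) • (b j) : B) : H) := by
                push_cast [Submodule.coe_sum]; rfl
            _ = y := by rw [this]
  have hsnd : ∀ p ∈ s, (p : H × H).2 ∈ B := fun p hp =>
    Submodule.subset_span (by exact Finset.mem_coe.2 (Finset.mem_image_of_mem Prod.snd hp))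
  -- key decomposition
  have key : ∀ h : H, (h ⊗ₜ[k] (1:H)) * T = ∑ j, (ρ j ((h ⊗ₜ[k] (1:H)) * T)) ⊗ₜ[k] ((b j : H)) := by
    intro h
    have hrep : (h ⊗ₜ[k] (1:H)) * T = ∑ p ∈ s, (h * p.1) ⊗ₜ[k] p.2 := by
      rw [hs, Finset.mul_sum]
      exact Finset.sum_congr rfl fun p _ => by
        rw [Algebra.TensorProduct.tmul_mul_tmul, one_mul]
    rw [hrep]
    calc ∑ p ∈ s, (h * p.1) ⊗ₜ[k] p.2
        = ∑ p ∈ s, ∑ j, (ρ j ((h * p.1) ⊗ₜ[k] p.2)) ⊗ₜ[k] ((b j : H)) := by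
          refine Finset.sum_congr rfl fun p hp => ?_
          rw [recon _ _ (hsnd p hp)]
      _ = ∑ j, ∑ p ∈ s, (ρ j ((h * p.1) ⊗ₜ[k] p.2)) ⊗ₜ[k] ((b j : H)) := Finset.sum_comm
      _ = ∑ j, (ρ j (∑ p ∈ s, (h * p.1) ⊗ₜ[k] p.2)) ⊗ₜ[k] ((b j : H)) := by
          refine Finset.sum_congr rfl fun j _ => ?_
          rw [map_sum, TensorProduct.sum_tmul]
  -- membership of coefficients in A
  have hcA : ∀ (h : H) j, ρ j ((h ⊗ₜ[k] (1:H)) * T) ∈ A := by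
    intro h j
    rw [hT, ← qh_star Q t ht h, ← hT]
    have hrep : T * ((1:H) ⊗ₜ[k] h) = ∑ p ∈ s, p.1 ⊗ₜ[k] (p.2 * h) := by
      rw [hs, Finset.sum_mul]
      exact Finset.sum_congr rfl fun p _ => by
        rw [Algebra.TensorProduct.tmul_mul_tmul, mul_one]
    rw [hrep, map_sum]
    refine Submodule.sum_mem _ fun p hp => ?_
    rw [ρ_tmul]
    exact Submodule.smul_mem _ _ (Submodule.subset_span
      (Finset.mem_coe.2 (Finset.mem_image_of_mem Prod.fst hp)))
  -- every h lies in a fixed finite-dimensional subspace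
  set W : Submodule k H := ⨆ j : Fin n, A.map (LinearMap.mulRight k (Q.beta * (b j : H))) with hW
  have hall : ∀ h : H, h ∈ W := by
    intro h
    have hrecover : h = ∑ j, (ρ j ((h ⊗ₜ[k] (1:H)) * T)) * (Q.beta * (b j : H)) := by
      have h1 : h = LQ Q ((h ⊗ₜ[k] (1:H)) * T) := by
        rw [qh_LQ_left, hT, qh_LQ_Tel, hεt, one_smul, mul_one]
      calc h = LQ Q ((h ⊗ₜ[k] (1:H)) * T) := h1
        _ = LQ Q (∑ j, (ρ j ((h ⊗ₜ[k] (1:H)) * T)) ⊗ₜ[k] ((b j : H))) := congrArg _ (key h)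
        _ = ∑ j, LQ Q ((ρ j ((h ⊗ₜ[k] (1:H)) * T)) ⊗ₜ[k] ((b j : H))) := map_sum _ _ _
        _ = ∑ j, (ρ j ((h ⊗ₜ[k] (1:H)) * T)) * (Q.beta * (b j : H)) :=
            Finset.sum_congr rfl fun j _ => by rw [LQ_tmul, mul_assoc]
    rw [hrecover]
    refine Submodule.sum_mem _ fun j _ => ?_
    refine Submodule.mem_iSup_of_mem j ?_
    exact Submodule.mem_map_of_mem (hcA h j)
  haveI : FiniteDimensional k W := Submodule.finiteDimensional_iSup _
  have htop : W = ⊤ := eq_top_iff.2 fun h _ => hall h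
  rw [htop] at this
  exact Submodule.topEquiv.finiteDimensional
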